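/- arXiv:1612.07711 — 5 statements merged into one kernel-verified Lean document; each statement's English description precedes it below -/
import Mathlib

section
/- Let H be the quaternion algebra (−1,−5/ℚ) and ‡ the involution negating only the ij coefficient. The ℤ-module O₁ = ℤ ⊕ ℤi ⊕ ℤj ⊕ ℤ·(5+5i+3j−ij)/10 ⊂ H is closed under multiplication (it is an order), and O₁ ∩ O₁^‡ = ℤ ⊕ ℤi ⊕ ℤj ⊕ ℤ·(1+i+j+ij)/2. -/
open Quaternion

/-- The map `‡` on `(−1,−5 / ℚ)` negating only the `ij`-coefficient, as a
`ℤ`-linear map. -/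
def ddagL : ℍ[ℚ, -1, -5] →ₗ[ℤ] ℍ[ℚ, -1, -5] where
  toFun q := ⟨q.re, q.imI, q.imJ, -q.imK⟩
  map_add' a b := by ext <;> simp <;> ring
  map_smul' n a := by ext <;> simp <;> ring

noncomputable section

/-- The order `O₁ = ℤ ⊕ ℤi ⊕ ℤj ⊕ ℤ·(5+5i+3j−ij)/10`. -/
def O₁ : Submodule ℤ ℍ[ℚ, -1, -5] :=
  Submodule.span ℤ {(1 : ℍ[ℚ, -1, -5]),
    ⟨0, 1, 0, 0⟩, ⟨0, 0, 1, 0⟩, ⟨1/2, 1/2, 3/10, -1/10⟩}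

/-- `ℤ ⊕ ℤi ⊕ ℤj ⊕ ℤ·(1+i+j+ij)/2`. -/
def O₁' : Submodule ℤ ℍ[ℚ, -1, -5] :=
  Submodule.span ℤ {(1 : ℍ[ℚ, -1, -5]),
    ⟨0, 1, 0, 0⟩, ⟨0, 0, 1, 0⟩, ⟨1/2, 1/2, 1/2, 1/2⟩}

section aux

/-- Generic description of membership in the span of four quaternions
with prescribed rational coordinate shapes. -/
lemma mem_span4_of_coeffs (v₄ : ℍ[ℚ, -1, -5]) (q : ℍ[ℚ, -1, -5])
    (a b c d : ℤ)
    (h : q = (a : ℤ) • (1 : ℍ[ℚ, -1, -5]) + b • (⟨0,1,0,0⟩ : ℍ[ℚ, -1, -5])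
        + c • (⟨0,0,1,0⟩ : ℍ[ℚ, -1, -5]) + d • v₄) :
    q ∈ Submodule.span ℤ {(1 : ℍ[ℚ, -1, -5]), ⟨0, 1, 0, 0⟩, ⟨0, 0, 1, 0⟩, v₄} := by
  subst h
  refine add_mem (add_mem (add_mem ?_ ?_) ?_) ?_ <;>
    exact Submodule.smul_mem _ _ (Submodule.subset_span (by simp))

lemma mem_O₁_iff (q : ℍ[ℚ, -1, -5]) :
    q ∈ O₁ ↔ ∃ a b c d : ℤ,
      q.re = a + d/2 ∧ q.imI = b + d/2 ∧ q.imJ = c + 3*d/10 ∧ q.imK = -d/10 := by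
  constructor
  · intro hq
    induction hq using Submodule.span_induction with
    | mem x hx =>
      rcases hx with h | h | h | h <;> subst h
      · exact ⟨1, 0, 0, 0, by norm_num⟩
      · exact ⟨0, 1, 0, 0, by norm_num⟩
      · exact ⟨0, 0, 1, 0, by norm_num⟩
      · exact ⟨0, 0, 0, 1, by norm_num⟩
    | zero => exact ⟨0, 0, 0, 0, by norm_num⟩
    | add x y hx hy ihx ihy =>
      obtain ⟨a, b, c, d, h1, h2, h3, h4⟩ := ihx
      obtain ⟨a', b', c', d', h1', h2', h3', h4'⟩ := ihy
      refine ⟨a + a', b + b', c + c', d + d', ?_, ?_, ?_, ?_⟩ <;>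
        simp only [QuaternionAlgebra.re_add, QuaternionAlgebra.imI_add,
          QuaternionAlgebra.imJ_add, QuaternionAlgebra.imK_add,
          h1, h2, h3, h4, h1', h2', h3', h4'] <;> push_cast <;> ring
    | smul n x hx ih =>
      obtain ⟨a, b, c, d, h1, h2, h3, h4⟩ := ih
      refine ⟨n * a, n * b, n * c, n * d, ?_, ?_, ?_, ?_⟩ <;>
        simp only [QuaternionAlgebra.re_smul, QuaternionAlgebra.imI_smul,
          QuaternionAlgebra.imJ_smul, QuaternionAlgebra.imK_smul] <;>
        simp only [zsmul_eq_mul, h1, h2, h3, h4] <;> push_cast <;> ring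
  · rintro ⟨a, b, c, d, h1, h2, h3, h4⟩
    refine mem_span4_of_coeffs _ q a b c d ?_
    ext <;>
      simp only [QuaternionAlgebra.re_add, QuaternionAlgebra.imI_add,
        QuaternionAlgebra.imJ_add, QuaternionAlgebra.imK_add,
        QuaternionAlgebra.re_smul, QuaternionAlgebra.imI_smul,
        QuaternionAlgebra.imJ_smul, QuaternionAlgebra.imK_smul,
        QuaternionAlgebra.re_one, QuaternionAlgebra.imI_one,
        QuaternionAlgebra.imJ_one, QuaternionAlgebra.imK_one] <;>
      simp only [zsmul_eq_mul, h1, h2, h3, h4] <;> push_cast <;> ring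

lemma mem_O₁'_iff (q : ℍ[ℚ, -1, -5]) :
    q ∈ O₁' ↔ ∃ a b c d : ℤ,
      q.re = a + d/2 ∧ q.imI = b + d/2 ∧ q.imJ = c + d/2 ∧ q.imK = d/2 := by
  constructor
  · intro hq
    induction hq using Submodule.span_induction with
    | mem x hx =>
      rcases hx with h | h | h | h <;> subst h
      · exact ⟨1, 0, 0, 0, by norm_num⟩
      · exact ⟨0, 1, 0, 0, by norm_num⟩
      · exact ⟨0, 0, 1, 0, by norm_num⟩
      · exact ⟨0, 0, 0, 1, by norm_num⟩
    | zero => exact ⟨0, 0, 0, 0, by norm_num⟩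
    | add x y hx hy ihx ihy =>
      obtain ⟨a, b, c, d, h1, h2, h3, h4⟩ := ihx
      obtain ⟨a', b', c', d', h1', h2', h3', h4'⟩ := ihy
      refine ⟨a + a', b + b', c + c', d + d', ?_, ?_, ?_, ?_⟩ <;>
        simp only [QuaternionAlgebra.re_add, QuaternionAlgebra.imI_add,
          QuaternionAlgebra.imJ_add, QuaternionAlgebra.imK_add,
          h1, h2, h3, h4, h1', h2', h3', h4'] <;> push_cast <;> ring
    | smul n x hx ih =>
      obtain ⟨a, b, c, d, h1, h2, h3, h4⟩ := ih
      refine ⟨n * a, n * b, n * c, n * d, ?_, ?_, ?_, ?_⟩ <;>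
        simp only [QuaternionAlgebra.re_smul, QuaternionAlgebra.imI_smul,
          QuaternionAlgebra.imJ_smul, QuaternionAlgebra.imK_smul] <;>
        simp only [zsmul_eq_mul, h1, h2, h3, h4] <;> push_cast <;> ring
  · rintro ⟨a, b, c, d, h1, h2, h3, h4⟩
    refine mem_span4_of_coeffs _ q a b c d ?_
    ext <;>
      simp only [QuaternionAlgebra.re_add, QuaternionAlgebra.imI_add,
        QuaternionAlgebra.imJ_add, QuaternionAlgebra.imK_add,
        QuaternionAlgebra.re_smul, QuaternionAlgebra.imI_smul,
        QuaternionAlgebra.imJ_smul, QuaternionAlgebra.imK_smul,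
        QuaternionAlgebra.re_one, QuaternionAlgebra.imI_one,
        QuaternionAlgebra.imJ_one, QuaternionAlgebra.imK_one] <;>
      simp only [zsmul_eq_mul, h1, h2, h3, h4] <;> push_cast <;> ring

end aux

/-- `O₁` is closed under multiplication (it is an order), and
`O₁ ⊓ O₁^‡ = ℤ ⊕ ℤi ⊕ ℤj ⊕ ℤ·(1+i+j+ij)/2`. -/
theorem stmt_1 :
    (∀ x ∈ O₁, ∀ y ∈ O₁, x * y ∈ O₁) ∧
    O₁ ⊓ O₁.map ddagL = O₁' := by
  constructor
  · intro x hx y hy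
    rw [mem_O₁_iff] at hx hy ⊢
    obtain ⟨a, b, c, d, h1, h2, h3, h4⟩ := hx
    obtain ⟨A, B, C, D, g1, g2, g3, g4⟩ := hy
    refine ⟨a*A - b*B + b*D + 5*b*C - 5*c*B - 5*c*C - 4*c*D - 2*d*B + d*C - d*D,
            a*B + b*A + 5*b*C + 2*b*D - 5*c*B - 3*c*D - d*B + 3*d*C,
            a*C + 3*b*C + b*D + c*A - 3*c*B - c*D - d*B + 2*d*C,
            a*D + 3*d*B + d*A - 10*b*C - 3*b*D + 10*c*B + 5*c*D - 5*d*C + d*D,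
            ?_, ?_, ?_, ?_⟩ <;>
      simp only [QuaternionAlgebra.re_mul, QuaternionAlgebra.imI_mul,
        QuaternionAlgebra.imJ_mul, QuaternionAlgebra.imK_mul,
        h1, h2, h3, h4, g1, g2, g3, g4] <;> push_cast <;> ring
  · apply le_antisymm
    · rintro q ⟨hq1, hq2⟩
      obtain ⟨p, hp, hpq⟩ := hq2
      rw [SetLike.mem_coe, mem_O₁_iff] at hq1
      rw [SetLike.mem_coe, mem_O₁_iff] at hp
      rw [mem_O₁'_iff]
      obtain ⟨a, b, c, d, h1, h2, h3, h4⟩ := hq1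
      obtain ⟨a', b', c', d', g1, g2, g3, g4⟩ := hp
      have e1 : q.re = p.re := by rw [← hpq]; rfl
      have e2 : q.imI = p.imI := by rw [← hpq]; rfl
      have e3 : q.imJ = p.imJ := by rw [← hpq]; rfl
      have e4 : q.imK = -p.imK := by rw [← hpq]; rfl
      -- from imK: -d/10 = d'/10, so d' = -d
      have hd' : (d' : ℚ) = -d := by
        rw [h4, g4] at e4; field_simp at e4; linarith
      have hd'' : d' = -d := by exact_mod_cast hd'
      -- from imJ: c + 3d/10 = c' + 3d'/10 = c' - 3d/10
      have hc : (5 : ℚ) * (c' - c) = 3 * d := by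
        rw [h3, g3, hd'] at e3; linarith
      have hcz : 5 * (c' - c) = 3 * d := by exact_mod_cast hc
      have h5d : 5 ∣ d := by omega
      obtain ⟨e, he⟩ := h5d
      refine ⟨a + 3*e, b + 3*e, c + 2*e, -e, ?_, ?_, ?_, ?_⟩
      · rw [h1, he]; push_cast; ring
      · rw [h2, he]; push_cast; ring
      · rw [h3, he]; push_cast; ring
      · rw [h4, he]; push_cast; ring
    · intro q hq
      rw [mem_O₁'_iff] at hq
      obtain ⟨a, b, c, d, h1, h2, h3, h4⟩ := hq
      rw [Submodule.mem_inf]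
      refine ⟨?_, ?_⟩
      · rw [mem_O₁_iff]
        refine ⟨a + 3*d, b + 3*d, c + 2*d, -5*d, ?_, ?_, ?_, ?_⟩ <;>
          simp only [h1, h2, h3, h4] <;> push_cast <;> ring
      · rw [Submodule.mem_map]
        refine ⟨⟨q.re, q.imI, q.imJ, -q.imK⟩, ?_, ?_⟩
        · rw [mem_O₁_iff]
          exact ⟨a - 2*d, b - 2*d, c - d, 5*d, by
            simp only [h1, h2, h3, h4]; push_cast; constructor; ring;
            constructor; ring; constructor; ring; ring⟩
        · show (⟨_, _, _, - -q.imK⟩ : ℍ[ℚ, -1, -5]) = q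
          simp
      
end
end

section
/- Let F be a field of char ≠ 2, V a 2-dimensional F-vector space with nondegenerate symmetric bilinear form b and quadratic form q(v) = b(v,v), and ‡ the adjoint involution on End(V). If g ∈ GL(V) satisfies g^‡ g ∈ F·id, then q(gv) = ε·det(g)·q(v) for all v ∈ V, where ε = ±1. -/
/-- If `‡` is the adjoint involution of a nondegenerate symmetric bilinear
form `b` on a 2-dimensional space `V`, `q(v) = b(v,v)`, and `g ∈ GL(V)` has
`g^‡ g` scalar, then `q(gv) = ε·det(g)·q(v)` for all `v`, with `ε = ±1`. -/
theorem stmt_6 (F V : Type*) [Field F] (hchar : (2 : F) ≠ 0)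
    [AddCommGroup V] [Module F V] (hdim : Module.finrank F V = 2)
    (b : LinearMap.BilinForm F V)
    (hsymm : ∀ v w : V, b v w = b w v)
    (hnd : b.Nondegenerate)
    (dag : Module.End F V → Module.End F V)
    (hadj : ∀ (σ : Module.End F V) (v w : V), b v (σ w) = b (dag σ v) w)
    (g : Module.End F V) (hg : IsUnit g)
    (hscalar : ∃ c : F, dag g * g = c • (1 : Module.End F V)) :
    ∃ ε : F, (ε = 1 ∨ ε = -1) ∧
      ∀ v : V, b (g v) (g v) = ε * LinearMap.det g * b v v := by
  obtain ⟨c, hc⟩ := hscalar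
  have : FiniteDimensional F V := FiniteDimensional.of_finrank_eq_succ hdim
  -- determinant of the adjoint equals determinant of g
  let B : Module.Basis (Fin 2) F V := Module.finBasisOfFinrankEq F V hdim
  have hdet_dag : LinearMap.det (dag g) = LinearMap.det g := by
    have hcomp : b.compLeft (dag g) = b.compRight g := by
      ext v w
      rw [LinearMap.BilinForm.compLeft_apply, LinearMap.BilinForm.compRight_apply]
      exact (hadj g v w).symm
    have hm := congrArg Matrix.det (congrArg (LinearMap.BilinForm.toMatrix B) hcomp)
    rw [BilinForm.toMatrix_compLeft, BilinForm.toMatrix_compRight,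
      Matrix.det_mul, Matrix.det_mul, Matrix.det_transpose] at hm
    have hG : (LinearMap.BilinForm.toMatrix B b).det ≠ 0 :=
      Matrix.nondegenerate_iff_det_ne_zero.mp (hnd.toMatrix B)
    have := mul_right_cancel₀ hG (by linear_combination hm :
      (LinearMap.toMatrix B B (dag g)).det * (LinearMap.BilinForm.toMatrix B b).det
        = (LinearMap.toMatrix B B g).det * (LinearMap.BilinForm.toMatrix B b).det)
    rwa [LinearMap.det_toMatrix, LinearMap.det_toMatrix] at this
  -- c² = (det g)²
  have hdetg : LinearMap.det g ≠ 0 := by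
    exact isUnit_iff_ne_zero.mp (LinearMap.isUnit_det g hg)
  have hcsq : c * c = LinearMap.det g * LinearMap.det g := by
    have := congrArg LinearMap.det hc
    rw [show dag g * g = (dag g).comp g from rfl, LinearMap.det_comp, hdet_dag,
      LinearMap.det_smul, hdim] at this
    rw [show LinearMap.det (1 : Module.End F V) = 1 from map_one LinearMap.det] at this
    linear_combination -this
  refine ⟨c * (LinearMap.det g)⁻¹, ?_, ?_⟩
  · rw [← mul_self_eq_one_iff]
    field_simp
    linear_combination hcsq
  · intro v
    have h1 : b (g v) (g v) = b (dag g (g v)) v := hadj g (g v) v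
    have h2 : dag g (g v) = c • v := by
      have := congrArg (fun (σ : Module.End F V) => σ v) hc
      simpa using this
    rw [h1, h2]
    have : c * (LinearMap.det g)⁻¹ * LinearMap.det g = c := by field_simp
    rw [this]
    simp
end

section
/- Let F be a dyadic local field (residue characteristic 2) with ring of integers 𝔬 and maximal ideal 𝔭, and let λ ∈ 𝔬 be square-free (ord(λ) ∈ {0,1}). Consider the quadratic form q(x,y) = x² + λy² on F². If −λ ≡ u² mod 𝔭² for some unit u (i.e., the quadratic defect 𝔡(−λ) ≠ 𝔭), then the lattice 𝔬² is not 𝔬-maximal: there exists a lattice Λ' properly containing 𝔬² with q(Λ') ⊆ 𝔬. -/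
/-- Over a dyadic local field, for `q(x,y) = x² + λy²` with `λ` square-free:
if `−λ ≡ u² mod 𝔭²` for a unit `u` (quadratic defect ≠ 𝔭), then the lattice
`𝔬²` is not `𝔬`-maximal: some strictly larger lattice still has integral
`q`-values. -/
theorem stmt_14 (R F : Type*) [CommRing R] [IsDomain R]
    [IsDiscreteValuationRing R] [Field F] [Algebra R F] [IsFractionRing R F]
    (hdyadic : ¬ IsUnit (2 : R))
    (lam : R) (hsqfree : IsUnit lam ∨ Irreducible lam)
    (hdefect : ∃ u : R, IsUnit u ∧
      -lam - u ^ 2 ∈ (IsLocalRing.maximalIdeal R) ^ 2)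
    (q : (Fin 2 → F) → F)
    (hq : ∀ v, q v = v 0 ^ 2 + algebraMap R F lam * v 1 ^ 2) :
    ∃ Λ' : Submodule R (Fin 2 → F), Λ'.FG ∧
      Submodule.span R {![(1 : F), 0], ![0, 1]} < Λ' ∧
      ∀ v ∈ Λ', ∃ r : R, q v = algebraMap R F r := by
  obtain ⟨u, hu, hdef⟩ := hdefect
  obtain ⟨π, hπ⟩ := IsDiscreteValuationRing.exists_irreducible R
  have hinj : Function.Injective (algebraMap R F) := IsFractionRing.injective R F
  have hπ0 : algebraMap R F π ≠ 0 := by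
    intro h
    exact hπ.ne_zero (hinj (by simpa using h))
  have h2mem : (2 : R) ∈ IsLocalRing.maximalIdeal R := hdyadic
  have h2dvd : π ∣ (2 : R) := by
    rwa [hπ.maximalIdeal_eq, Ideal.mem_span_singleton] at h2mem
  obtain ⟨t, ht⟩ := h2dvd
  have hsdvd : π ^ 2 ∣ (-lam - u ^ 2) := by
    rwa [hπ.maximalIdeal_eq, Ideal.span_singleton_pow, Ideal.mem_span_singleton] at hdef
  obtain ⟨s, hs⟩ := hsdvd
  set U := algebraMap R F u
  set P := algebraMap R F π
  set L := algebraMap R F lam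
  set w : Fin 2 → F := ![U / P, 1 / P] with hw
  refine ⟨Submodule.span R {![(1 : F), 0], ![0, 1], w}, Submodule.fg_span (Set.toFinite _),
    ?_, ?_⟩
  · constructor
    · exact Submodule.span_mono (by intro x hx; simp only [Set.mem_insert_iff] at hx ⊢; tauto)
    · intro hle
      have hwmem : w ∈ Submodule.span R {![(1 : F), 0], ![0, 1]} :=
        hle (Submodule.subset_span (by simp))
      rw [Submodule.mem_span_pair] at hwmem
      obtain ⟨a, b, hab⟩ := hwmem
      have h1 : algebraMap R F b = 1 / P := by
        have := congrFun hab 1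
        simpa [Algebra.smul_def, hw] using this
      have h2 : algebraMap R F (b * π) = 1 := by
        rw [map_mul, h1]
        field_simp
        rfl
      have hbπ : b * π = 1 := hinj (by simpa using h2)
      exact hπ.not_isUnit (IsUnit.of_mul_eq_one (a := π) b (by rw [mul_comm]; exact hbπ))
  · intro v hv
    rw [show ({![(1 : F), 0], ![0, 1], w} : Set (Fin 2 → F)) =
      insert ![(1:F), 0] {![0,1], w} from rfl, Submodule.mem_span_insert] at hv
    obtain ⟨a, z, hz, rfl⟩ := hv
    rw [Submodule.mem_span_pair] at hz
    obtain ⟨b, c, rfl⟩ := hz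
    refine ⟨a ^ 2 + lam * b ^ 2 + t * c * (a * u + lam * b) - s * c ^ 2, ?_⟩
    have h2F := congrArg (algebraMap R F) ht
    simp only [map_mul, map_ofNat] at h2F
    have hsF := congrArg (algebraMap R F) hs
    simp only [map_sub, map_neg, map_pow, map_mul] at hsF
    rw [hq]
    simp only [Pi.add_apply, Pi.smul_apply, hw, Matrix.cons_val_zero, Matrix.cons_val_one,
      Matrix.head_cons]
    simp only [Algebra.smul_def, map_add, map_mul, map_pow, map_sub]
    field_simp
    linear_combination ((algebraMap R F a) * (algebraMap R F c) * U +
      L * (algebraMap R F b) * (algebraMap R F c)) * P * h2F -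
      (algebraMap R F c) ^ 2 * hsF
end

section
/- Let F be a local field of char ≠ 2, 𝔬 its ring of integers, and q(x,y) = x² + λy² an anisotropic quadratic form on F² (i.e., −λ is not a square in F). Then Λ_max = {v ∈ F² : q(v) ∈ 𝔬} is an 𝔬-lattice (an 𝔬-submodule that is finitely generated and spans F²), and it is the unique 𝔬-maximal lattice: any lattice Λ with q(Λ) ⊆ 𝔬 is contained in Λ_max. -/
open IsLocalRing

section Aux
variable {R F : Type*} [CommRing R] [IsDomain R] [IsDiscreteValuationRing R]
  [Field F] [Algebra R F] [IsFractionRing R F]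

private lemma aux_not_int {x : F} (hx : ¬ ∃ r : R, algebraMap R F r = x) :
    ∃ r : R, r ∈ maximalIdeal R ∧ algebraMap R F r = x⁻¹ := by
  rcases ValuationRing.isInteger_or_isInteger R x with h | h
  · exact absurd h hx
  · obtain ⟨r, hr⟩ := h
    refine ⟨r, ?_, hr⟩
    rw [mem_maximalIdeal, mem_nonunits_iff]
    intro hu
    obtain ⟨u, rfl⟩ := hu
    apply hx
    have hx0 : x ≠ 0 := by
      rintro rfl
      exact hx ⟨0, by simp⟩
    refine ⟨(u⁻¹ : Rˣ), ?_⟩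
    have h1 : (algebraMap R F) ((u⁻¹ : Rˣ) : R) * (algebraMap R F) (u : R) = 1 := by
      rw [← map_mul]; simp
    rw [hr] at h1
    calc (algebraMap R F) ((u⁻¹ : Rˣ) : R) = (x⁻¹)⁻¹ := eq_inv_of_mul_eq_one_left h1
      _ = x := inv_inv x

private lemma aux_sq {x : F} (h : ∃ r : R, algebraMap R F r = x ^ 2) :
    ∃ r : R, algebraMap R F r = x := by
  by_cases hx : ∃ r : R, algebraMap R F r = x
  · exact hx
  · exfalso
    have hx0 : x ≠ 0 := by rintro rfl; exact hx ⟨0, by simp⟩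
    obtain ⟨s, _, hs⟩ := aux_not_int hx
    obtain ⟨r2, hr2⟩ := h
    apply hx
    refine ⟨r2 * s, ?_⟩
    rw [map_mul, hr2, hs]
    field_simp

end Aux

section Newton
variable {R F : Type*} [CommRing R] [IsDomain R] [IsDiscreteValuationRing R]
  [IsAdicComplete (IsLocalRing.maximalIdeal R) R]
  [Field F] [Algebra R F] [IsFractionRing R F]

private lemma aux_newton (two_ne : (2 : F) ≠ 0) {lam : F}
    (haniso : ∀ t : F, t ^ 2 ≠ -lam) {x y : F}
    (hQ : ∃ r : R, algebraMap R F r = x ^ 2 + lam * y ^ 2) :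
    ∃ r : R, algebraMap R F r = (2 * x) ^ 2 := by
  set A := algebraMap R F with hA
  by_contra h4
  obtain ⟨rQ, hrQ⟩ := hQ
  have hx0 : x ≠ 0 := by rintro rfl; exact h4 ⟨0, by simp⟩
  have hy0 : y ≠ 0 := by
    rintro rfl
    refine h4 ⟨4 * rQ, ?_⟩
    rw [map_mul, hrQ, map_ofNat]
    ring
  have h2x : (2 : F) * x ≠ 0 := mul_ne_zero two_ne hx0
  have hQ0 : x ^ 2 + lam * y ^ 2 ≠ 0 := by
    intro h0
    apply haniso (x / y)
    field_simp
    linear_combination h0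
  obtain ⟨s, hsm, hs⟩ := aux_not_int h4
  set e0 : R := rQ * s with he0
  have he0m : e0 ∈ IsLocalRing.maximalIdeal R := Ideal.mul_mem_left _ _ hsm
  set t : F := x / y with ht
  have ht0 : t ≠ 0 := div_ne_zero hx0 hy0
  have hs1 : A s * (2 * x) ^ 2 = 1 := by
    rw [hs]; field_simp
  have hbase : t ^ 2 + lam = 4 * t ^ 2 * A e0 := by
    rw [he0, map_mul, hrQ, ht]
    field_simp
    linear_combination (-(x ^ 2 + lam * y ^ 2)) * hs1
  -- Newton iteration
  obtain ⟨e, c, he00, hc00, heS, hcS⟩ :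
      ∃ e c : ℕ → R, e 0 = e0 ∧ c 0 = 1 ∧
        (∀ n, e (n + 1) = e n ^ 2 * Ring.inverse (1 - 2 * e n) ^ 2) ∧
        (∀ n, c (n + 1) = c n * (1 - 2 * e n)) := by
    classical
    set step : R × R → R × R := fun p =>
      (p.1 ^ 2 * Ring.inverse (1 - 2 * p.1) ^ 2, p.2 * (1 - 2 * p.1)) with hstep
    refine ⟨fun n => (step^[n] (e0, 1)).1, fun n => (step^[n] (e0, 1)).2, rfl, rfl, ?_, ?_⟩ <;>
      intro n <;> simp only [Function.iterate_succ_apply'] <;> rfl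
  have key : ∀ n, e n ∈ IsLocalRing.maximalIdeal R ^ (n + 1) ∧
      (t * A (c n)) ^ 2 + lam = 4 * (t * A (c n)) ^ 2 * A (e n) := by
    intro n
    induction n with
    | zero =>
      refine ⟨by rw [he00, pow_one]; exact he0m, ?_⟩
      rw [hc00, he00, map_one, mul_one]
      exact hbase
    | succ n ih =>
      obtain ⟨ihm, ihid⟩ := ih
      have hmem : e n ∈ IsLocalRing.maximalIdeal R :=
        Ideal.pow_le_self (Nat.succ_ne_zero n) ihm
      have hu : IsUnit (1 - 2 * e n) :=
        (IsLocalRing.isUnit_or_isUnit_one_sub_self (2 * e n)).resolve_left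
          (Ideal.mul_mem_left _ 2 hmem)
      constructor
      · rw [heS]
        refine Ideal.mul_mem_right _ _ ?_
        have h2 : e n ^ 2 ∈ (IsLocalRing.maximalIdeal R ^ (n + 1)) ^ 2 :=
          Ideal.pow_mem_pow ihm 2
        rw [← pow_mul] at h2
        exact Ideal.pow_le_pow_right (by omega) h2
      · have hinv : A (1 - 2 * e n) * A (Ring.inverse (1 - 2 * e n)) = 1 := by
          rw [← map_mul, Ring.mul_inverse_cancel _ hu, map_one]
        rw [heS, hcS]
        simp only [map_mul, map_pow, map_sub, map_one, map_ofNat] at hinv ⊢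
        linear_combination ihid - 4 * (t * A (c n)) ^ 2 * (A (e n)) ^ 2 *
          ((1 - 2 * A (e n)) * A (Ring.inverse (1 - 2 * e n)) + 1) * hinv
  have hdiff : ∀ n, c (n + 1) - c n ∈ IsLocalRing.maximalIdeal R ^ (n + 1) := by
    intro n
    have h : c (n + 1) - c n = (-2 * c n) * e n := by rw [hcS]; ring
    rw [h]
    exact Ideal.mul_mem_left _ _ (key n).1
  have hcau : ∀ {m n : ℕ}, m ≤ n →
      c m ≡ c n [SMOD (IsLocalRing.maximalIdeal R ^ m • ⊤ : Ideal R)] := by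
    intro m n h
    rw [SModEq.sub_mem, Ideal.smul_eq_mul, Ideal.mul_top]
    induction n, h using Nat.le_induction with
    | base => simp
    | succ n hmn ih =>
      have h2 : c m - c (n + 1) = (c m - c n) - (c (n + 1) - c n) := by ring
      rw [h2]
      exact sub_mem ih (Ideal.pow_le_pow_right (by omega) (hdiff n))
  obtain ⟨L, hL⟩ := IsPrecomplete.prec IsAdicComplete.toIsPrecomplete @hcau
  have hLmem : ∀ n : ℕ, L - c n ∈ IsLocalRing.maximalIdeal R ^ n := by
    intro n
    have h := hL n
    rw [SModEq.sub_mem, Ideal.smul_eq_mul, Ideal.mul_top] at h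
    simpa using neg_mem h
  set T : F := t * A L with hT
  set rn : ℕ → R := fun n => (L - c n) * (L + c n) + 4 * c n ^ 2 * e n with hrn
  have hTn : ∀ n : ℕ, T ^ 2 + lam = t ^ 2 * A (rn n) := by
    intro n
    have ihid := (key n).2
    rw [hT, hrn]
    simp only [map_add, map_mul, map_sub, map_pow, map_ofNat]
    linear_combination ihid
  have hrmem : ∀ n, rn n ∈ IsLocalRing.maximalIdeal R ^ n := by
    intro n
    refine add_mem (Ideal.mul_mem_right _ _ (hLmem n)) ?_
    exact Ideal.mul_mem_left _ _ (Ideal.pow_le_pow_right (by omega) (key n).1)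
  have hrr : ∀ n, rn n = rn 0 := by
    intro n
    have ht2 : t ^ 2 ≠ 0 := pow_ne_zero _ ht0
    have h : t ^ 2 * A (rn n) = t ^ 2 * A (rn 0) := by rw [← hTn n, ← hTn 0]
    exact IsFractionRing.injective R F (mul_left_cancel₀ ht2 h)
  have hzero : rn 0 = 0 := by
    have hH : IsHausdorff (IsLocalRing.maximalIdeal R) R := IsAdicComplete.toIsHausdorff
    refine hH.haus (rn 0) (fun n => ?_)
    rw [SModEq.sub_mem, Ideal.smul_eq_mul, Ideal.mul_top, sub_zero]
    rw [← hrr n]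
    exact hrmem n
  have : T ^ 2 = -lam := by
    have h := hTn 0
    rw [hzero, map_zero, mul_zero] at h
    linear_combination h
  exact haniso T this

end Newton

section Helpers
variable {R F : Type*} [CommRing R] [IsDomain R] [IsDiscreteValuationRing R]
  [IsAdicComplete (IsLocalRing.maximalIdeal R) R]
  [Field F] [Algebra R F] [IsFractionRing R F]

private lemma aux_pair (two_ne : (2 : F) ≠ 0) {lam : F}
    (haniso : ∀ t : F, t ^ 2 ≠ -lam) {x y : F}
    (h : ∃ r : R, algebraMap R F r = x ^ 2 + lam * y ^ 2) :
    (∃ r : R, algebraMap R F r = 2 * x) ∧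
      (∃ r : R, algebraMap R F r = 4 * (lam * y ^ 2)) := by
  have h2 := aux_newton two_ne haniso h
  obtain ⟨rQ, hrQ⟩ := h
  obtain ⟨s2, hs2⟩ := h2
  refine ⟨aux_sq ⟨s2, hs2⟩, ⟨4 * rQ - s2, ?_⟩⟩
  rw [map_sub, map_mul, map_ofNat, hrQ, hs2]
  ring

private lemma aux_add (two_ne : (2 : F) ≠ 0) {lam : F}
    (haniso : ∀ t : F, t ^ 2 ≠ -lam) (a b c d : F) (r k : R) (hr0 : r ≠ 0)
    (hr : algebraMap R F r = a ^ 2 + lam * b ^ 2)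
    (hrk : algebraMap R F (r * k) = c ^ 2 + lam * d ^ 2) :
    ∃ s : R, algebraMap R F s = (a + c) ^ 2 + lam * (b + d) ^ 2 := by
  set A := algebraMap R F with hA
  have hAr : A r ≠ 0 := by
    rw [hA, map_ne_zero_iff _ (IsFractionRing.injective R F)]; exact hr0
  set x : F := (a * c + lam * b * d) / A r with hx
  set y' : F := (a * d - b * c) / A r with hy'
  rw [map_mul] at hrk
  have hxy : ∃ rr : R, A rr = x ^ 2 + lam * y' ^ 2 := by
    refine ⟨k, ?_⟩
    rw [hx, hy']
    field_simp
    linear_combination (a ^ 2 + lam * b ^ 2) * hrk + (A k * A r) * hr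
  obtain ⟨⟨s1, hs1⟩, -⟩ := aux_pair two_ne haniso hxy
  have hxr : x * A r = a * c + lam * b * d := by rw [hx]; field_simp
  refine ⟨r + r * k + r * s1, ?_⟩
  rw [map_add, map_add, map_mul, map_mul]
  linear_combination hr + hrk + A r * hs1 + 2 * hxr

end Helpers

private lemma aux_fg_of_le {R M : Type*} [CommRing R] [IsNoetherianRing R] [AddCommGroup M]
    [Module R M] {P N : Submodule R M} (hN : N.FG) (h : P ≤ N) : P.FG := by
  haveI := isNoetherian_of_fg_of_noetherian N hN
  have heq : P = Submodule.map N.subtype (Submodule.comap N.subtype P) := by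
    rw [Submodule.map_comap_subtype]
    exact (inf_eq_right.mpr h).symm
  rw [heq]
  exact (IsNoetherian.noetherian _).map _


/-- For an anisotropic form `q(x,y) = x² + λy²` over a (complete) local field,
`Λ_max = {v : q(v) ∈ 𝔬}` is an `𝔬`-lattice and is the unique `𝔬`-maximal
lattice: every lattice with integral `q`-values is contained in it. -/
theorem stmt_15 (R F : Type*) [CommRing R] [IsDomain R]
    [IsDiscreteValuationRing R]
    [IsAdicComplete (IsLocalRing.maximalIdeal R) R]
    [Field F] [Algebra R F] [IsFractionRing R F] (hchar : (2 : F) ≠ 0)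
    (lam : F) (hlam : lam ≠ 0)
    (haniso : ∀ t : F, t ^ 2 ≠ -lam)
    (q : (Fin 2 → F) → F)
    (hq : ∀ v, q v = v 0 ^ 2 + lam * v 1 ^ 2) :
    ∃ Λmax : Submodule R (Fin 2 → F),
      (Λmax : Set (Fin 2 → F)) = {v | ∃ r : R, q v = algebraMap R F r} ∧
      Λmax.FG ∧
      Submodule.span F (Λmax : Set (Fin 2 → F)) = ⊤ ∧
      ∀ Λ : Submodule R (Fin 2 → F), (∀ v ∈ Λ, ∃ r : R, q v = algebraMap R F r) →
        Λ ≤ Λmax := by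
  classical
  set A := algebraMap R F with hA
  have inj : Function.Injective A := IsFractionRing.injective R F
  -- anisotropy: zero values only at zero
  have aniso0 : ∀ a b : F, a ^ 2 + lam * b ^ 2 = 0 → a = 0 ∧ b = 0 := by
    intro a b h
    by_cases hb : b = 0
    · subst hb
      refine ⟨?_, rfl⟩
      have : a ^ 2 = 0 := by linear_combination h
      exact pow_eq_zero_iff (n := 2) (by norm_num) |>.mp this
    · exfalso
      apply haniso (a / b)
      field_simp
      linear_combination h
  obtain ⟨rl, sl, hslmem, hlamdef⟩ := IsFractionRing.div_surjective (A := R) lam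
  have hAsl : A sl ≠ 0 := by
    rw [hA, map_ne_zero_iff _ inj]; exact nonZeroDivisors.ne_zero hslmem
  have hllam : A rl = lam * A sl := by
    rw [← hlamdef]; exact (div_mul_cancel₀ _ hAsl).symm
  have hArl : A rl ≠ 0 := by rw [hllam]; exact mul_ne_zero hlam hAsl
  have h2Arl : 2 * A rl ≠ 0 := mul_ne_zero hchar hArl
  -- the submodule
  refine ⟨{ carrier := {v | ∃ r : R, q v = algebraMap R F r}
            zero_mem' := ⟨0, by rw [hq]; simp⟩
            add_mem' := ?_
            smul_mem' := ?_ }, rfl, ?_, ?_, ?_⟩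
  · -- additivity
    rintro u w ⟨r, hr⟩ ⟨r', hr'⟩
    rw [hq] at hr hr'
    show ∃ rr : R, q (u + w) = A rr
    have hgoal : ∀ rr : R, A rr = (u 0 + w 0) ^ 2 + lam * (u 1 + w 1) ^ 2 →
        q (u + w) = A rr := by
      intro rr h
      rw [hq]
      simp only [Pi.add_apply]
      exact h.symm
    by_cases hrz : r = 0
    · subst hrz
      rw [map_zero] at hr
      obtain ⟨h0, h1⟩ := aniso0 _ _ hr
      exact ⟨r', hgoal r' (by rw [h0, h1, ← hr']; ring)⟩
    by_cases hrz' : r' = 0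
    · subst hrz'
      rw [map_zero] at hr'
      obtain ⟨h0, h1⟩ := aniso0 _ _ hr'
      exact ⟨r, hgoal r (by rw [h0, h1, ← hr]; ring)⟩
    rcases ValuationRing.dvd_total r r' with ⟨k, hk⟩ | ⟨k, hk⟩
    · obtain ⟨s, hs⟩ := aux_add hchar haniso (u 0) (u 1) (w 0) (w 1) r k hrz
        hr.symm (by rw [← hk]; exact hr'.symm)
      exact ⟨s, hgoal s hs⟩
    · obtain ⟨s, hs⟩ := aux_add hchar haniso (w 0) (w 1) (u 0) (u 1) r' k hrz'
        hr'.symm (by rw [← hk]; exact hr.symm)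
      exact ⟨s, hgoal s (by rw [hs]; ring)⟩
  · -- scalar multiplication
    rintro s v ⟨r, hr⟩
    rw [hq] at hr
    refine ⟨s ^ 2 * r, ?_⟩
    rw [hq]
    simp only [Pi.smul_apply, Algebra.smul_def, map_mul, map_pow]
    linear_combination (A s) ^ 2 * hr
  · -- finitely generated
    set g0 : Fin 2 → F := ![(2 : F)⁻¹, 0] with hg0
    set g1 : Fin 2 → F := ![0, (2 * A rl)⁻¹] with hg1
    set N : Submodule R (Fin 2 → F) := Submodule.span R {g0, g1} with hN
    have hsub : ∀ v : Fin 2 → F, (∃ r : R, q v = A r) → v ∈ N := by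
      intro v hv
      obtain ⟨r, hr⟩ := hv
      rw [hq] at hr
      obtain ⟨⟨r1, h1⟩, ⟨j, hj⟩⟩ := aux_pair hchar haniso ⟨r, hr.symm⟩
      have h3sq : A (j * rl * sl) = (2 * A rl * v 1) ^ 2 := by
        rw [map_mul, map_mul, hj]
        linear_combination (-(4 * v 1 ^ 2 * A rl)) * hllam
      obtain ⟨r3, h3⟩ := aux_sq ⟨j * rl * sl, h3sq⟩
      have hrepr : v = r1 • g0 + r3 • g1 := by
        funext i
        fin_cases i <;>
          simp only [Pi.add_apply, Pi.smul_apply, Algebra.smul_def, hg0, hg1,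
            Matrix.cons_val_zero, Matrix.cons_val_one, Matrix.head_cons,
            mul_zero, add_zero, zero_add]
        · show v 0 = A r1 * 2⁻¹ + A r3 * 0
          rw [h1, mul_zero, add_zero, mul_comm, ← mul_assoc, inv_mul_cancel₀ hchar, one_mul]
        · show v 1 = A r1 * 0 + A r3 * (2 * A rl)⁻¹
          rw [h3, mul_zero, zero_add, mul_comm, ← mul_assoc, inv_mul_cancel₀ h2Arl, one_mul]
      rw [hrepr]
      exact add_mem (Submodule.smul_mem _ _ (Submodule.subset_span (by simp)))
        (Submodule.smul_mem _ _ (Submodule.subset_span (by simp)))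
    have hNfg : N.FG := Submodule.fg_span (Set.toFinite _)
    exact aux_fg_of_le hNfg (fun v hv => hsub v hv)
  · -- spans
    rw [eq_top_iff]
    rintro v -
    have m0 : (![1, 0] : Fin 2 → F) ∈
        ({v | ∃ r : R, q v = algebraMap R F r} : Set (Fin 2 → F)) := by
      refine ⟨1, ?_⟩
      rw [hq]
      simp
    have m1 : (![0, A sl] : Fin 2 → F) ∈
        ({v | ∃ r : R, q v = algebraMap R F r} : Set (Fin 2 → F)) := by
      refine ⟨rl * sl, ?_⟩
      rw [hq]
      simp only [Matrix.cons_val_zero, Matrix.cons_val_one, Matrix.head_cons, map_mul]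
      linear_combination (-(A sl)) * hllam
    have hrepr : v = v 0 • ![1, 0] + (v 1 / A sl) • (![0, A sl] : Fin 2 → F) := by
      funext i
      fin_cases i
      · simp
      · simp only [Pi.add_apply, Pi.smul_apply, smul_eq_mul,
          Matrix.cons_val_zero, Matrix.cons_val_one, Matrix.head_cons,
          mul_zero, add_zero, zero_add, mul_one]
        show v 1 = v 0 * 0 + v 1 / A sl * A sl
        rw [mul_zero, zero_add, div_mul_cancel₀ _ hAsl]
    rw [hrepr]
    exact add_mem (Submodule.smul_mem _ _ (Submodule.subset_span m0))
      (Submodule.smul_mem _ _ (Submodule.subset_span m1))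
  · -- maximality
    intro Λ hΛ v hv
    exact hΛ v hv
end

section
/- Let F be a field of char ≠ 2 with a quaternion algebra H, standard involution (conjugation) x ↦ x̄, and an orthogonal involution ‡. Then for x ∈ H^×, x^‡ x ∈ F if and only if x^‡ = x̄ or x^‡ = −x̄. -/
open Quaternion

/-- For a quaternion algebra `H` over a field of characteristic ≠ 2 with an
orthogonal involution `‡`, a unit `x` satisfies `x^‡ x ∈ F` iff
`x^‡ = x̄` or `x^‡ = −x̄`. -/
theorem stmt_18 (F : Type*) [Field F] (hchar : (2 : F) ≠ 0)
    (a b : F) (ha : a ≠ 0) (hb : b ≠ 0)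
    (f : ℍ[F, a, b] →ₗ[F] ℍ[F, a, b])
    (hanti : ∀ x y : ℍ[F, a, b], f (x * y) = f y * f x)
    (hinv : ∀ x : ℍ[F, a, b], f (f x) = x)
    (horth : ∃ y : ℍ[F, a, b], f y ≠ star y) :
    ∀ x : ℍ[F, a, b], IsUnit x →
      ((∃ c : F, f x * x = algebraMap F ℍ[F, a, b] c) ↔
        f x = star x ∨ f x = -star x) := by
  have hf1 : f 1 = 1 := by
    have h := hanti 1 (f 1)
    rw [one_mul, hinv 1, one_mul] at h
    exact h.symm
  have hfc : ∀ r : F, f (algebraMap F ℍ[F, a, b] r) = algebraMap F ℍ[F, a, b] r := by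
    intro r
    rw [Algebra.algebraMap_eq_smul_one, map_smul, hf1]
  have hsmc : ∀ y : ℍ[F, a, b], star y * y = algebraMap F ℍ[F, a, b] ((star y * y).re) :=
    fun y => QuaternionAlgebra.star_mul_eq_coe y
  intro x hx
  constructor
  · rintro ⟨c, hc⟩
    obtain ⟨u, hu⟩ := hx
    have hxu : x * ((u⁻¹ : _) : ℍ[F, a, b]) = 1 := by rw [← hu]; exact u.mul_inv
    set n : F := (star x * x).re with hn_def
    have hn : star x * x = algebraMap F ℍ[F, a, b] n := hsmc x
    have hxne : x ≠ 0 := by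
      intro h0
      rw [h0, zero_mul] at hxu
      exact one_ne_zero hxu.symm
    have hn0 : n ≠ 0 := by
      intro h0
      rw [h0, map_zero] at hn
      have hsx : star x = 0 := by
        rw [← mul_one (star x), ← hxu, ← mul_assoc, hn, zero_mul]
      exact hxne (by simpa using congrArg star hsx)
    set t : F := c / n with ht_def
    have key : f x = t • star x := by
      have h1 : (f x - t • star x) * x = 0 := by
        rw [sub_mul, smul_mul_assoc, hn, hc, Algebra.smul_def, ← map_mul,
          div_mul_cancel₀ c hn0, sub_self]
      have h2 : (f x - t • star x) * (x * ((u⁻¹ : _) : ℍ[F, a, b])) = 0 := by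
        rw [← mul_assoc, h1, zero_mul]
      rw [hxu, mul_one, sub_eq_zero] at h2
      exact h2
    set A : ℍ[F, a, b] := algebraMap F ℍ[F, a, b] (2 * x.re) with hA_def
    have hst : star x = A - x := by
      rw [x.star_eq_two_re_sub, zero_mul, add_zero, hA_def, QuaternionAlgebra.coe_algebraMap]
    have hfs : f (star x) = A - f x := by rw [hst, map_sub, hA_def, hfc]
    have h5 : x = t • (A - t • (A - x)) := by
      calc x = f (f x) := (hinv x).symm
        _ = f (t • star x) := by rw [key]
        _ = t • f (star x) := by rw [map_smul]
        _ = t • (A - f x) := by rw [hfs]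
        _ = t • (A - t • star x) := by rw [key]
        _ = t • (A - t • (A - x)) := by rw [hst]
    by_cases htt : t * t = 1
    · rcases mul_self_eq_one_iff.mp htt with h1 | h1
      · left; rw [key, h1, one_smul]
      · right; rw [key, h1, neg_smul, one_smul]
    · have hx_scalar : (1 - t * t) • x = (t - t * t) • A := by
        have h7 : (1 - t * t) • x - (t - t * t) • A = x - t • (A - t • (A - x)) := by
          module
        rw [← sub_eq_zero, h7, sub_eq_zero]
        exact h5
      have h10 : (1 - t * t) ≠ 0 := fun h => htt (by linear_combination -h)
      have h11 : x = ((1 - t * t)⁻¹ * (t - t * t)) • A := by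
        have := congrArg (fun z => (1 - t * t)⁻¹ • z) hx_scalar
        simpa [smul_smul, inv_mul_cancel₀ h10] using this
      have hx_eq : ∃ r : F, x = algebraMap F ℍ[F, a, b] r := by
        refine ⟨(1 - t * t)⁻¹ * (t - t * t) * (2 * x.re), ?_⟩
        calc x = ((1 - t * t)⁻¹ * (t - t * t)) • A := h11
          _ = algebraMap F ℍ[F, a, b] ((1 - t * t)⁻¹ * (t - t * t) * (2 * x.re)) := by
              rw [hA_def, Algebra.smul_def, ← map_mul]
      obtain ⟨r, hr⟩ := hx_eq
      left
      rw [hr, hfc r]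
      exact (QuaternionAlgebra.star_coe r).symm
  · rintro (h | h)
    · exact ⟨(star x * x).re, by rw [h]; exact hsmc x⟩
    · exact ⟨-(star x * x).re, by rw [h, neg_mul, map_neg]; exact congrArg Neg.neg (hsmc x)⟩
end
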